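/- Let P be a finite stochastic matrix that is reversible with respect to a probability distribution π (π(a)P(a,b) = π(b)P(b,a) for all a,b) and irreducible. If for each ordered pair (s,t) of states a path γ(s,t) of edges with positive transition probability is chosen, then the second-largest eigenvalue λ₂ of P satisfies 1 - λ₂ ≥ 1/(ρL), where L is the maximum path length and ρ = max over edges (a,b) of (1/(π(a)P(a,b))) * sum over pairs (s,t) whose path uses (a,b) of π(s)π(t). -/

import Mathlib

/-- `IsEdgePath P s t es` : `es` is a list of consecutive edges leading from `s` to `t`,
each edge having positive transition probability under `P`. -/
def IsEdgePath {V : Type*} (P : Matrix V V ℝ) : V → V → List (V × V) → Prop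
  | s, t, [] => s = t
  | s, t, e :: rest => e.1 = s ∧ 0 < P e.1 e.2 ∧ IsEdgePath P e.2 t rest

namespace CPaux
variable {V : Type*} {P : Matrix V V ℝ}

lemma isEdgePath_append {t : V} {l1 l2 : List (V×V)} : ∀ {s},
    IsEdgePath P s t (l1 ++ l2) ↔ ∃ m, IsEdgePath P s m l1 ∧ IsEdgePath P m t l2 := by
  induction l1 with
  | nil => intro s; simp [IsEdgePath]
  | cons e l ih => intro s; simp [IsEdgePath, ih]; tauto

lemma mem_pos : ∀ {es : List (V×V)} {s t}, IsEdgePath P s t es → ∀ e ∈ es, 0 < P e.1 e.2 := by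
  intro es
  induction es with
  | nil => intro s t _ e he; simp at he
  | cons f l ih =>
    intro s t h e he
    rcases h with ⟨h1, h2, h3⟩
    rcases List.mem_cons.1 he with rfl | he
    · exact h2
    · exact ih h3 e he

lemma telescope (v : V → ℝ) : ∀ {es : List (V×V)} {s t}, IsEdgePath P s t es →
    v s - v t = (es.map (fun e => v e.1 - v e.2)).sum := by
  intro es
  induction es with
  | nil => intro s t h; simp [IsEdgePath] at h; simp [h]
  | cons e l ih =>
    intro s t h
    rcases h with ⟨h1, _, h3⟩
    have := ih h3
    simp only [List.map_cons, List.sum_cons, ← this, h1]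
    ring

lemma dedup : ∀ (n : ℕ) {s t : V} {es}, es.length ≤ n → IsEdgePath P s t es →
    ∃ es', IsEdgePath P s t es' ∧ es'.Nodup ∧ es'.length ≤ es.length ∧ ∀ e ∈ es', e ∈ es := by
  intro n
  induction n with
  | zero =>
    intro s t es hlen h
    have : es = [] := List.length_eq_zero_iff.1 (Nat.le_zero.1 hlen)
    subst this
    exact ⟨[], h, List.nodup_nil, le_rfl, by simp⟩
  | succ n ih =>
    intro s t es hlen h
    match es with
    | [] => exact ⟨[], h, List.nodup_nil, le_rfl, by simp⟩
    | e :: rest =>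
      rcases h with ⟨h1, h2, h3⟩
      by_cases hmem : e ∈ rest
      · rcases List.append_of_mem hmem with ⟨l2, l3, rfl⟩
        rcases isEdgePath_append.1 h3 with ⟨m, hm1, hm2⟩
        rcases hm2 with ⟨he1, _, hl3⟩
        have hp : IsEdgePath P s t (e :: l3) := ⟨h1, h2, hl3⟩
        have hlen' : (e :: l3).length ≤ n := by
          simp only [List.length_cons, List.length_append] at hlen ⊢
          omega
        rcases ih hlen' hp with ⟨es', hp', hnd, hle, hsub⟩
        refine ⟨es', hp', hnd, ?_, ?_⟩
        · simp only [List.length_cons, List.length_append] at hle ⊢; omega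
        · intro x hx
          rcases List.mem_cons.1 (hsub x hx) with rfl | hx'
          · exact List.mem_cons_self
          · exact List.mem_cons_of_mem _ (by simp [hx'])
      · have hlen' : rest.length ≤ n := by simp at hlen; omega
        rcases ih hlen' h3 with ⟨rest', hp', hnd, hle, hsub⟩
        refine ⟨e :: rest', ⟨h1, h2, hp'⟩, ?_, by simpa using hle, ?_⟩
        · exact List.nodup_cons.2 ⟨fun hc => hmem (hsub _ hc), hnd⟩
        · intro x hx
          rcases List.mem_cons.1 hx with rfl | hx'
          · exact List.mem_cons_self
          · exact List.mem_cons_of_mem _ (hsub _ hx')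

lemma list_cs : ∀ l : List ℝ, (l.sum)^2 ≤ l.length * (l.map (fun x => x^2)).sum := by
  intro l
  induction l with
  | nil => simp
  | cons x l ih =>
    have hQ : 0 ≤ (l.map (fun x => x^2)).sum :=
      List.sum_nonneg (by intro y hy; rcases List.mem_map.1 hy with ⟨z, _, rfl⟩; positivity)
    have hn : (0:ℝ) ≤ l.length := Nat.cast_nonneg _
    simp only [List.sum_cons, List.map_cons, List.length_cons, Nat.cast_add, Nat.cast_one]
    set n : ℝ := (l.length : ℝ) with hn_def
    set S := l.sum
    set Q := (l.map (fun x => x^2)).sum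
    rcases eq_or_lt_of_le hn with hza | hpos
    · have hS2 : S ^ 2 ≤ 0 := by simpa [← hza] using ih
      have hS : S = 0 := by nlinarith [sq_nonneg S]
      rw [← hza, hS]; nlinarith
    · nlinarith [sq_nonneg (n * x - S), mul_pos hpos hpos, mul_nonneg hn hQ]

end CPaux

/-- Canonical path (Sinclair) bound: let `P` be a finite stochastic matrix, reversible
with respect to a probability distribution `π` and irreducible.  If for each ordered
pair `(s,t)` a canonical path `γ s t` of edges with positive transition probability is
chosen, all of length at most `L`, and every edge `(a,b)` has load
`(1/(π a * P a b)) * ∑_{(s,t) : (a,b) ∈ γ s t} π s * π t` at most `ρ`, then every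
eigenvalue `lam ≠ 1` of `P` (in particular the second largest, `λ₂`) satisfies
`1 - lam ≥ 1/(ρ L)`. -/
theorem canonical_path_spectral_gap_bound
    {V : Type*} [Fintype V] [DecidableEq V] [Nonempty V]
    (P : Matrix V V ℝ) (π : V → ℝ)
    (hPnn : ∀ a b, 0 ≤ P a b) (hProw : ∀ a, ∑ b, P a b = 1)
    (hπnn : ∀ a, 0 ≤ π a) (hπsum : ∑ a, π a = 1)
    (hrev : ∀ a b, π a * P a b = π b * P b a)
    (hirr : ∀ a b, ∃ k : ℕ, 0 < (P ^ k) a b)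
    (γ : V → V → List (V × V))
    (hγ : ∀ s t, IsEdgePath P s t (γ s t))
    (L : ℕ) (hL : ∀ s t, (γ s t).length ≤ L)
    (ρ : ℝ)
    (hρ : ∀ a b, 0 < P a b →
      (∑ p ∈ Finset.univ.filter (fun p : V × V => (a, b) ∈ γ p.1 p.2), π p.1 * π p.2) /
          (π a * P a b) ≤ ρ)
    (lam : ℝ) (v : V → ℝ) (hv : v ≠ 0)
    (heig : P.mulVec v = lam • v) (hlam : lam ≠ 1) :
    1 - lam ≥ 1 / (ρ * L) := by
  classical
  obtain ⟨x₀, hx₀'⟩ := Function.ne_iff.1 hv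
  have hx₀ : v x₀ ≠ 0 := hx₀'
  -- eigenvector equation pointwise
  have hmv : ∀ a, ∑ b, P a b * v b = lam * v a := by
    intro a
    have := congrFun heig a
    simpa [Matrix.mulVec, dotProduct] using this
  -- handle the trivial (one-point) case
  by_cases htriv : ∀ x y : V, x = y
  · exfalso
    have huniv : (Finset.univ : Finset V) = {x₀} := by
      ext y; simp [htriv y x₀]
    have hP1 : P x₀ x₀ = 1 := by
      have := hProw x₀; rwa [huniv, Finset.sum_singleton] at this
    have h2 := hmv x₀
    rw [huniv, Finset.sum_singleton, hP1, one_mul] at h2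
    exact hlam (mul_right_cancel₀ hx₀ (by linarith)).symm
  push_neg at htriv
  obtain ⟨x, y, hxy⟩ := htriv
  -- column sums
  have hcol : ∀ b, ∑ a, π a * P a b = π b := by
    intro b
    calc ∑ a, π a * P a b = ∑ a, π b * P b a := Finset.sum_congr rfl fun a _ => hrev a b
      _ = π b := by rw [← Finset.mul_sum, hProw, mul_one]
  -- reversibility of powers
  have hrevpow : ∀ (k : ℕ) (a b : V), π a * (P ^ k) a b = π b * (P ^ k) b a := by
    intro k
    induction k with
    | zero =>
      intro a b
      by_cases h : a = b
      · subst h; rfl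
      · simp [Matrix.one_apply, h, Ne.symm h]
    | succ k ih =>
      intro a b
      rw [pow_succ]
      calc π a * (P ^ k * P) a b = ∑ c, π a * ((P ^ k) a c * P c b) := by
            rw [Matrix.mul_apply, Finset.mul_sum]
        _ = ∑ c, π b * (P b c * (P ^ k) c a) := by
            apply Finset.sum_congr rfl
            intro c _
            calc π a * ((P ^ k) a c * P c b) = (π a * (P ^ k) a c) * P c b := by ring
              _ = (π c * (P ^ k) c a) * P c b := by rw [ih a c]
              _ = (π c * P c b) * (P ^ k) c a := by ring
              _ = (π b * P b c) * (P ^ k) c a := by rw [hrev c b]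
              _ = π b * (P b c * (P ^ k) c a) := by ring
        _ = π b * (P * P ^ k) b a := by rw [Matrix.mul_apply, Finset.mul_sum]
        _ = π b * (P ^ k * P) b a := by rw [← pow_succ', pow_succ]
  -- positivity of π
  have hπpos : ∀ a, 0 < π a := by
    intro a
    rcases (hπnn a).lt_or_eq with h | h
    · exact h
    · exfalso
      obtain ⟨b, hb⟩ : ∃ b, 0 < π b := by
        by_contra hc
        push_neg at hc
        have : ∑ a, π a ≤ 0 := Finset.sum_nonpos fun a _ => hc a
        rw [hπsum] at this; linarith
      obtain ⟨k, hk⟩ := hirr b a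
      have h2 := hrevpow k b a
      rw [← h] at h2
      nlinarith [hk, hb]
  -- mean zero
  have hmean : ∑ a, π a * v a = 0 := by
    have h1 : ∑ a, π a * (∑ b, P a b * v b) = ∑ b, π b * v b := by
      calc ∑ a, π a * (∑ b, P a b * v b) = ∑ a, ∑ b, π a * P a b * v b := by
            simp [Finset.mul_sum, mul_assoc]
        _ = ∑ b, ∑ a, π a * P a b * v b := Finset.sum_comm
        _ = ∑ b, (∑ a, π a * P a b) * v b := by simp [Finset.sum_mul]
        _ = ∑ b, π b * v b := by simp only [hcol]
    have h2 : ∑ a, π a * (∑ b, P a b * v b) = lam * ∑ a, π a * v a := by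
      rw [Finset.mul_sum]
      apply Finset.sum_congr rfl
      intro a _
      rw [hmv a]; ring
    have h3 : lam * (∑ a, π a * v a) = ∑ a, π a * v a := by rw [← h2, h1]
    by_contra hS
    exact hlam (mul_right_cancel₀ hS (by linarith))
  set Var := ∑ a, π a * (v a)^2 with hVar
  have hVarpos : 0 < Var := by
    have h1 : π x₀ * (v x₀)^2 ≤ Var :=
      Finset.single_le_sum (f := fun a => π a * (v a)^2)
        (fun a _ => mul_nonneg (hπnn a) (sq_nonneg _)) (Finset.mem_univ x₀)
    have h2 : 0 < (v x₀)^2 := lt_of_le_of_ne (sq_nonneg _) (Ne.symm (pow_ne_zero 2 hx₀))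
    nlinarith [hπpos x₀]
  -- energy identity
  have split : ∀ (f g h : V → V → ℝ),
      (∑ a, ∑ b, (f a b - 2 * g a b + h a b)) =
        (∑ a, ∑ b, f a b) - 2 * (∑ a, ∑ b, g a b) + (∑ a, ∑ b, h a b) := by
    intro f g h
    simp only [Finset.sum_add_distrib, Finset.sum_sub_distrib, ← Finset.mul_sum]
  have hE : ∑ a, ∑ b, π a * P a b * (v a - v b)^2 = 2 * (1 - lam) * Var := by
    have hA : ∑ a, ∑ b, π a * P a b * (v a)^2 = Var := by
      apply Finset.sum_congr rfl
      intro a _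
      calc ∑ b, π a * P a b * (v a)^2 = π a * (v a)^2 * ∑ b, P a b := by
            rw [Finset.mul_sum]; exact Finset.sum_congr rfl fun b _ => by ring
        _ = π a * (v a)^2 := by rw [hProw, mul_one]
    have hB : ∑ a, ∑ b, π a * P a b * (v a * v b) = lam * Var := by
      calc ∑ a, ∑ b, π a * P a b * (v a * v b)
          = ∑ a, π a * v a * (lam * v a) := by
            apply Finset.sum_congr rfl
            intro a _
            rw [← hmv a, Finset.mul_sum]
            exact Finset.sum_congr rfl fun b _ => by ring
        _ = lam * Var := by
            rw [hVar, Finset.mul_sum]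
            exact Finset.sum_congr rfl fun a _ => by ring
    have hC : ∑ a, ∑ b, π a * P a b * (v b)^2 = Var := by
      rw [Finset.sum_comm]
      calc ∑ b, ∑ a, π a * P a b * (v b)^2
          = ∑ b, (∑ a, π a * P a b) * (v b)^2 := by
            apply Finset.sum_congr rfl
            intro b _
            rw [Finset.sum_mul]
        _ = Var := by
            rw [hVar]
            exact Finset.sum_congr rfl fun b _ => by rw [hcol]
    calc ∑ a, ∑ b, π a * P a b * (v a - v b)^2
        = ∑ a, ∑ b, (π a * P a b * (v a)^2 - 2 * (π a * P a b * (v a * v b))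
            + π a * P a b * (v b)^2) := by
          apply Finset.sum_congr rfl; intro a _
          apply Finset.sum_congr rfl; intro b _
          ring
      _ = Var - 2 * (lam * Var) + Var := by rw [split, hA, hB, hC]
      _ = 2 * (1 - lam) * Var := by ring
  -- variance identity
  have hE2 : ∑ s, ∑ t, π s * π t * (v s - v t)^2 = 2 * Var := by
    have hA : ∑ s, ∑ t, π s * π t * (v s)^2 = Var := by
      apply Finset.sum_congr rfl
      intro s _
      calc ∑ t, π s * π t * (v s)^2 = π s * (v s)^2 * ∑ t, π t := by
            rw [Finset.mul_sum]; exact Finset.sum_congr rfl fun t _ => by ring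
        _ = π s * (v s)^2 := by rw [hπsum, mul_one]
    have hB : ∑ s, ∑ t, π s * π t * (v s * v t) = 0 := by
      apply Finset.sum_eq_zero
      intro s _
      calc ∑ t, π s * π t * (v s * v t) = π s * v s * ∑ t, π t * v t := by
            rw [Finset.mul_sum]; exact Finset.sum_congr rfl fun t _ => by ring
        _ = 0 := by rw [hmean, mul_zero]
    have hC : ∑ s, ∑ t, π s * π t * (v t)^2 = Var := by
      rw [Finset.sum_comm]
      apply Finset.sum_congr rfl
      intro t _
      calc ∑ s, π s * π t * (v t)^2 = π t * (v t)^2 * ∑ s, π s := by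
            rw [Finset.mul_sum]; exact Finset.sum_congr rfl fun s _ => by ring
        _ = π t * (v t)^2 := by rw [hπsum, mul_one]
    calc ∑ s, ∑ t, π s * π t * (v s - v t)^2
        = ∑ s, ∑ t, (π s * π t * (v s)^2 - 2 * (π s * π t * (v s * v t))
            + π s * π t * (v t)^2) := by
          apply Finset.sum_congr rfl; intro s _
          apply Finset.sum_congr rfl; intro t _
          ring
      _ = Var - 2 * 0 + Var := by rw [split, hA, hB, hC]
      _ = 2 * Var := by ring
  -- deduplicated paths
  choose γ' hsp hnd hlen hsub using fun s t => CPaux.dedup L (hL s t) (hγ s t)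
  set F : V × V → ℝ := fun e => (v e.1 - v e.2)^2 with hF
  have hFnn : ∀ e : V × V, 0 ≤ F e := fun e => sq_nonneg _
  have hLsum_nn : ∀ s t, 0 ≤ ((γ' s t).map F).sum := by
    intro s t
    exact List.sum_nonneg (by intro z hz; rcases List.mem_map.1 hz with ⟨e, _, rfl⟩; exact hFnn e)
  have hcs : ∀ s t : V, (v s - v t)^2 ≤ (L:ℝ) * ((γ' s t).map F).sum := by
    intro s t
    have h1 := CPaux.telescope v (hsp s t)
    have h2 := CPaux.list_cs ((γ' s t).map (fun e => v e.1 - v e.2))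
    rw [← h1] at h2
    have hmap : (((γ' s t).map (fun e => v e.1 - v e.2)).map (fun x => x^2)) = (γ' s t).map F := by
      rw [List.map_map]; rfl
    rw [hmap, List.length_map] at h2
    have hlen' : ((γ' s t).length : ℝ) ≤ (L:ℝ) := by
      exact_mod_cast (hlen s t).trans (hL s t)
    exact h2.trans (mul_le_mul_of_nonneg_right hlen' (hLsum_nn s t))
  -- ρ is nonnegative
  have hρnn : 0 ≤ ρ := by
    rcases hne : γ x y with _ | ⟨e, l⟩
    · exfalso
      have := hγ x y
      rw [hne] at this
      simp only [IsEdgePath] at this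
      exact hxy this
    · have hmem : e ∈ γ x y := by rw [hne]; exact List.mem_cons_self
      have hpos := CPaux.mem_pos (hγ x y) e hmem
      refine le_trans (div_nonneg (Finset.sum_nonneg fun p _ => mul_nonneg (hπnn _) (hπnn _))
        (le_of_lt (mul_pos (hπpos e.1) hpos))) (hρ e.1 e.2 hpos)
  -- list sums as finset sums
  have hlistfin : ∀ s t, ((γ' s t).map F).sum = ∑ e ∈ Finset.univ.filter (fun e => e ∈ γ' s t), F e := by
    intro s t
    rw [← List.sum_toFinset _ (hnd s t)]
    apply Finset.sum_congr
    · ext e; simp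
    · intros; rfl
  -- the crucial swap and load bound
  have hswap : ∑ p : V × V, π p.1 * π p.2 * ((γ' p.1 p.2).map F).sum
      ≤ ρ * ∑ e : V × V, π e.1 * P e.1 e.2 * F e := by
    have key : ∑ p : V × V, π p.1 * π p.2 * ((γ' p.1 p.2).map F).sum
        = ∑ e : V × V, (∑ p ∈ Finset.univ.filter (fun p : V × V => e ∈ γ' p.1 p.2), π p.1 * π p.2) * F e := by
      simp_rw [hlistfin, Finset.sum_filter, Finset.mul_sum]
      rw [Finset.sum_comm]
      apply Finset.sum_congr rfl
      intro e _
      rw [Finset.sum_mul]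
      apply Finset.sum_congr rfl
      intro p _
      by_cases h : e ∈ γ' p.1 p.2 <;> simp [h]
    rw [key, Finset.mul_sum]
    apply Finset.sum_le_sum
    intro e _
    by_cases hcase : ∃ p : V × V, e ∈ γ' p.1 p.2
    · obtain ⟨p, hp⟩ := hcase
      have hpos : 0 < P e.1 e.2 := CPaux.mem_pos (hsp p.1 p.2) e hp
      have hQpos : 0 < π e.1 * P e.1 e.2 := mul_pos (hπpos e.1) hpos
      have hsubset : Finset.univ.filter (fun p : V × V => e ∈ γ' p.1 p.2)
          ⊆ Finset.univ.filter (fun p : V × V => (e.1, e.2) ∈ γ p.1 p.2) := by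
        intro q hq
        simp only [Finset.mem_filter] at *
        exact ⟨hq.1, hsub _ _ _ hq.2⟩
      have h1 : ∑ p ∈ Finset.univ.filter (fun p : V × V => e ∈ γ' p.1 p.2), π p.1 * π p.2
          ≤ ∑ p ∈ Finset.univ.filter (fun p : V × V => (e.1, e.2) ∈ γ p.1 p.2), π p.1 * π p.2 :=
        Finset.sum_le_sum_of_subset_of_nonneg hsubset (fun q _ _ => mul_nonneg (hπnn _) (hπnn _))
      have h2 : ∑ p ∈ Finset.univ.filter (fun p : V × V => (e.1, e.2) ∈ γ p.1 p.2), π p.1 * π p.2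
          ≤ ρ * (π e.1 * P e.1 e.2) := by
        have h := hρ e.1 e.2 hpos
        rw [div_le_iff₀ hQpos] at h
        linarith
      calc (∑ p ∈ Finset.univ.filter (fun p : V × V => e ∈ γ' p.1 p.2), π p.1 * π p.2) * F e
          ≤ (ρ * (π e.1 * P e.1 e.2)) * F e :=
            mul_le_mul_of_nonneg_right (h1.trans h2) (hFnn e)
        _ = ρ * (π e.1 * P e.1 e.2 * F e) := by ring
    · push_neg at hcase
      have hz : ∑ p ∈ Finset.univ.filter (fun p : V × V => e ∈ γ' p.1 p.2), π p.1 * π p.2 = 0 :=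
        Finset.sum_eq_zero fun q hq => absurd (Finset.mem_filter.1 hq).2 (hcase q)
      rw [hz, zero_mul]
      exact mul_nonneg hρnn (mul_nonneg (mul_nonneg (hπnn _) (hPnn _ _)) (hFnn e))
  -- main chain
  have hEprod : ∑ e : V × V, π e.1 * P e.1 e.2 * F e = 2 * (1 - lam) * Var := by
    rw [Fintype.sum_prod_type]
    exact hE
  have main : 2 * Var ≤ (L:ℝ) * (ρ * (2 * (1 - lam) * Var)) := by
    calc 2 * Var = ∑ s, ∑ t, π s * π t * (v s - v t)^2 := hE2.symm
      _ = ∑ p : V × V, π p.1 * π p.2 * (v p.1 - v p.2)^2 := by rw [Fintype.sum_prod_type]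
      _ ≤ ∑ p : V × V, π p.1 * π p.2 * ((L:ℝ) * ((γ' p.1 p.2).map F).sum) := by
          apply Finset.sum_le_sum
          intro p _
          exact mul_le_mul_of_nonneg_left (hcs p.1 p.2) (mul_nonneg (hπnn _) (hπnn _))
      _ = (L:ℝ) * ∑ p : V × V, π p.1 * π p.2 * ((γ' p.1 p.2).map F).sum := by
          rw [Finset.mul_sum]
          exact Finset.sum_congr rfl fun p _ => by ring
      _ ≤ (L:ℝ) * (ρ * ∑ e : V × V, π e.1 * P e.1 e.2 * F e) :=
          mul_le_mul_of_nonneg_left hswap (Nat.cast_nonneg L)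
      _ = (L:ℝ) * (ρ * (2 * (1 - lam) * Var)) := by rw [hEprod]
  have hfinal : 1 ≤ (ρ * (L:ℝ)) * (1 - lam) := by
    by_contra hcon
    push_neg at hcon
    have h2 : (L:ℝ) * (ρ * (2 * (1 - lam) * Var)) < 1 * (2 * Var) := by
      calc (L:ℝ) * (ρ * (2 * (1 - lam) * Var)) = (ρ * (L:ℝ)) * (1 - lam) * (2 * Var) := by ring
        _ < 1 * (2 * Var) := mul_lt_mul_of_pos_right hcon (by linarith)
    linarith
  have hRLpos : 0 < ρ * (L:ℝ) := by
    have hnn : 0 ≤ ρ * (L:ℝ) := mul_nonneg hρnn (Nat.cast_nonneg L)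
    rcases hnn.lt_or_eq with h | h
    · exact h
    · exfalso; rw [← h] at hfinal; linarith
  rw [ge_iff_le, div_le_iff₀ hRLpos, mul_comm]
  exact hfinal
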